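/- Let F/E be an extension of number fields, O_F and O_E their rings of integers, and define the capitulation group K_{F/E} = (F^{×+} ∩ [Ô_F^× · 𝔸_{E,f}^×]) / E^{×+}. Then there is an exact sequence 0 → O_F^{×+}/O_E^{×+} → K_{F/E} → Cl⁺(E) → Cl⁺(F), where the map K_{F/E} → Cl⁺(E) sends the class of a ∈ F^{×+} to the narrow class of the ideal of O_E whose extension to O_F equals aO_F. -/

import Mathlib

open NumberField FractionalIdeal

section

/-- The subgroup of totally positive elements `X^{×+}` of (the unit group of) a
number field `X`. -/
def posUnits (X : Type*) [Field X] : Subgroup Xˣ where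
  carrier := {x | ∀ σ : X →+* ℝ, 0 < σ (x : X)}
  one_mem' := by intro σ; simp
  mul_mem' := by
    intro a b ha hb σ
    rw [Units.val_mul, _root_.map_mul]
    exact mul_pos (ha σ) (hb σ)
  inv_mem' := by
    intro a ha σ
    rw [Units.val_inv_eq_inv_val, map_inv₀]
    exact inv_pos.mpr (ha σ)

variable (E F : Type*) [Field E] [Field F] [NumberField E] [NumberField F] [Algebra E F]

/-- The image of `E^{×+}` in `Fˣ`. -/
def posEInF : Subgroup Fˣ :=
  Subgroup.map (Units.map (algebraMap E F).toMonoidHom) (posUnits E)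

/-- The subgroup `Ô_F^×` of units of `F` integral at every finite place, i.e. the
image of `(𝓞 F)ˣ` in `Fˣ`. -/
def intUnits : Subgroup Fˣ :=
  (Units.map (algebraMap (𝓞 F) F).toMonoidHom).range

/-- The coercion of the inverse of an invertible fractional ideal equal to
`spanSingleton x` is `spanSingleton x⁻¹`. -/
theorem val_inv_of_spanSingleton {X : Type*} [Field X] [NumberField X]
    (J : (FractionalIdeal (nonZeroDivisors (𝓞 X)) X)ˣ) (x : Xˣ)
    (h : (J : FractionalIdeal (nonZeroDivisors (𝓞 X)) X)
      = spanSingleton (nonZeroDivisors (𝓞 X)) (x : X)) :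
    ((J⁻¹ : (FractionalIdeal (nonZeroDivisors (𝓞 X)) X)ˣ) :
        FractionalIdeal (nonZeroDivisors (𝓞 X)) X)
      = spanSingleton (nonZeroDivisors (𝓞 X)) (((x⁻¹ : Xˣ)) : X) := by
  have h1 : (J : FractionalIdeal (nonZeroDivisors (𝓞 X)) X) * ↑(J⁻¹) = 1 := by
    rw [← Units.val_mul, mul_inv_cancel, Units.val_one]
  have h2 : spanSingleton (nonZeroDivisors (𝓞 X)) (x : X)
      * spanSingleton (nonZeroDivisors (𝓞 X)) ((x : X)⁻¹) = 1 := by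
    rw [spanSingleton_mul_spanSingleton, mul_inv_cancel₀ (Units.ne_zero x),
      spanSingleton_one]
  have key : ((J⁻¹ : (FractionalIdeal (nonZeroDivisors (𝓞 X)) X)ˣ) :
      FractionalIdeal (nonZeroDivisors (𝓞 X)) X)
      = spanSingleton (nonZeroDivisors (𝓞 X)) ((x : X)⁻¹) := by
    calc (↑(J⁻¹) : FractionalIdeal (nonZeroDivisors (𝓞 X)) X)
        = 1 * ↑(J⁻¹) := (one_mul _).symm
      _ = (spanSingleton (nonZeroDivisors (𝓞 X)) (x : X)
            * spanSingleton (nonZeroDivisors (𝓞 X)) ((x : X)⁻¹)) * ↑(J⁻¹) := by rw [h2]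
      _ = spanSingleton (nonZeroDivisors (𝓞 X)) ((x : X)⁻¹)
            * ((J : FractionalIdeal (nonZeroDivisors (𝓞 X)) X) * ↑(J⁻¹)) := by
          rw [h]; ring
      _ = spanSingleton (nonZeroDivisors (𝓞 X)) ((x : X)⁻¹) := by rw [h1, mul_one]
  rw [key, Units.val_inv_eq_inv_val]

/-- The subgroup of principal fractional ideals generated by a totally positive
element; the narrow class group is the quotient by this subgroup. -/
def prinPlus (X : Type*) [Field X] [NumberField X] :
    Subgroup (FractionalIdeal (nonZeroDivisors (𝓞 X)) X)ˣ where
  carrier := {J | ∃ x : Xˣ, x ∈ posUnits X ∧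
    (J : FractionalIdeal (nonZeroDivisors (𝓞 X)) X)
      = spanSingleton (nonZeroDivisors (𝓞 X)) (x : X)}
  one_mem' := ⟨1, one_mem _, by rw [Units.val_one, Units.val_one, spanSingleton_one]⟩
  mul_mem' := by
    rintro a b ⟨x, hx, hxa⟩ ⟨y, hy, hyb⟩
    exact ⟨x * y, mul_mem hx hy, by
      rw [Units.val_mul, hxa, hyb, spanSingleton_mul_spanSingleton, Units.val_mul]⟩
  inv_mem' := by
    rintro a ⟨x, hx, hxa⟩
    exact ⟨x⁻¹, inv_mem hx, val_inv_of_spanSingleton a x hxa⟩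

/-- The narrow class group `Cl⁺(X)`: fractional ideals modulo totally positive
principal ideals. -/
def narrowClassGroup (X : Type*) [Field X] [NumberField X] :=
  (FractionalIdeal (nonZeroDivisors (𝓞 X)) X)ˣ ⧸ prinPlus X

instance (X : Type*) [Field X] [NumberField X] : CommGroup (narrowClassGroup X) :=
  QuotientGroup.Quotient.commGroup _

/-- The "capitulation numerator" `F^{×+} ∩ [Ô_F^× · 𝔸_{E,f}^×]`: totally positive
elements of `F` whose principal fractional ideal is the extension of a fractional
ideal of `E`.  Here `ext` is the extension-of-fractional-ideals homomorphism. -/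
def capNumerator (ext : (FractionalIdeal (nonZeroDivisors (𝓞 E)) E)ˣ →*
    (FractionalIdeal (nonZeroDivisors (𝓞 F)) F)ˣ) : Subgroup Fˣ where
  carrier := {x | x ∈ posUnits F ∧ ∃ I : (FractionalIdeal (nonZeroDivisors (𝓞 E)) E)ˣ,
    ((ext I : (FractionalIdeal (nonZeroDivisors (𝓞 F)) F)ˣ) :
        FractionalIdeal (nonZeroDivisors (𝓞 F)) F)
      = spanSingleton (nonZeroDivisors (𝓞 F)) (x : F)}
  one_mem' := ⟨one_mem _, 1, by rw [_root_.map_one, Units.val_one, Units.val_one,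
    spanSingleton_one]⟩
  mul_mem' := by
    rintro a b ⟨ha, I, hI⟩ ⟨hb, J, hJ⟩
    exact ⟨mul_mem ha hb, I * J, by
      rw [_root_.map_mul, Units.val_mul, hI, hJ, spanSingleton_mul_spanSingleton,
        Units.val_mul]⟩
  inv_mem' := by
    rintro a ⟨ha, I, hI⟩
    exact ⟨inv_mem ha, I⁻¹, by
      rw [_root_.map_inv]
      exact val_inv_of_spanSingleton (ext I) a hI⟩


theorem myIsLocMap_eq (E F : Type*) [Field E] [Field F] [NumberField E] [NumberField F]
    [Algebra E F] (hf : nonZeroDivisors (𝓞 E) ≤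
      Submonoid.comap (algebraMap (𝓞 E) (𝓞 F)) (nonZeroDivisors (𝓞 F))) :
    IsLocalization.map (S := E) F (algebraMap (𝓞 E) (𝓞 F)) hf = algebraMap E F := by
  refine IsLocalization.ringHom_ext (nonZeroDivisors (𝓞 E)) (RingHom.ext fun a => ?_)
  simp only [RingHom.comp_apply, IsLocalization.map_eq, ← IsScalarTower.algebraMap_apply]

theorem myExt_span (E F : Type*) [Field E] [Field F] [NumberField E] [NumberField F]
    [Algebra E F] (hf : nonZeroDivisors (𝓞 E) ≤
      Submonoid.comap (algebraMap (𝓞 E) (𝓞 F)) (nonZeroDivisors (𝓞 F))) (a : E) :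
    FractionalIdeal.extended F hf (spanSingleton (nonZeroDivisors (𝓞 E)) a)
      = spanSingleton (nonZeroDivisors (𝓞 F)) (algebraMap E F a) := by
  apply coeToSubmodule_injective
  show ((extended F hf _ : FractionalIdeal _ F) : Submodule (𝓞 F) F)
    = ((spanSingleton (nonZeroDivisors (𝓞 F)) (algebraMap E F a) :
        FractionalIdeal _ F) : Submodule (𝓞 F) F)
  rw [coe_extended_eq_span, coe_spanSingleton, myIsLocMap_eq]
  apply le_antisymm
  · rw [Submodule.span_le]
    rintro _ ⟨x, hx, rfl⟩
    have hx' : x ∈ spanSingleton (nonZeroDivisors (𝓞 E)) a := hx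
    obtain ⟨c, rfl⟩ := (mem_spanSingleton _).1 hx'
    rw [SetLike.mem_coe, Submodule.mem_span_singleton]
    refine ⟨algebraMap (𝓞 E) (𝓞 F) c, ?_⟩
    rw [Algebra.smul_def, Algebra.smul_def, _root_.map_mul,
      ← IsScalarTower.algebraMap_apply, ← IsScalarTower.algebraMap_apply]
  · rw [Submodule.span_le, Set.singleton_subset_iff]
    exact Submodule.subset_span ⟨a, mem_spanSingleton_self _ a, rfl⟩

/-- **The capitulation exact sequence**
`0 → O_F^{×+}/O_E^{×+} → K_{F/E} → Cl⁺(E) → Cl⁺(F)` (Dembélé–Loeffler–Pacetti):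
`K_{F/E} = (F^{×+} ∩ [Ô_F^× · 𝔸_{E,f}^×])/E^{×+}` is the capitulation group, the map
`K_{F/E} → Cl⁺(E)` sends the class of `a` to the narrow class of the ideal of `O_E`
whose extension to `O_F` is `aO_F`, and `Cl⁺(E) → Cl⁺(F)` is extension of ideals. -/
theorem capitulation_exact_sequence
    (hext : ∀ φ : E →+* ℂ, ComplexEmbedding.IsReal φ)   -- E totally real
    (hext' : ∀ φ : F →+* ℂ, ComplexEmbedding.IsReal φ)  -- F totally real
    (hf : nonZeroDivisors (𝓞 E) ≤
      Submonoid.comap (algebraMap (𝓞 E) (𝓞 F)) (nonZeroDivisors (𝓞 F)))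
    -- extension of (invertible) fractional ideals along `𝓞 E → 𝓞 F`:
    (ext : (FractionalIdeal (nonZeroDivisors (𝓞 E)) E)ˣ →*
      (FractionalIdeal (nonZeroDivisors (𝓞 F)) F)ˣ)
    (hextdef : ∀ I : (FractionalIdeal (nonZeroDivisors (𝓞 E)) E)ˣ,
      ((ext I : (FractionalIdeal (nonZeroDivisors (𝓞 F)) F)ˣ) :
          FractionalIdeal (nonZeroDivisors (𝓞 F)) F)
        = FractionalIdeal.extended F hf (I : FractionalIdeal (nonZeroDivisors (𝓞 E)) E))
    -- the three maps of the sequence, specified by their defining properties: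
    (f₁ : ((posUnits F ⊓ intUnits F : Subgroup Fˣ) ⧸
        ((posEInF E F ⊓ (posUnits F ⊓ intUnits F)).subgroupOf
          (posUnits F ⊓ intUnits F : Subgroup Fˣ))) →*
      ((capNumerator E F ext : Subgroup Fˣ) ⧸
        ((posEInF E F ⊓ capNumerator E F ext).subgroupOf (capNumerator E F ext))))
    (hf₁ : ∀ (x : Fˣ) (hx : x ∈ posUnits F ⊓ intUnits F) (hx' : x ∈ capNumerator E F ext),
      f₁ (QuotientGroup.mk ⟨x, hx⟩) = QuotientGroup.mk ⟨x, hx'⟩)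
    (f₂ : ((capNumerator E F ext : Subgroup Fˣ) ⧸
        ((posEInF E F ⊓ capNumerator E F ext).subgroupOf (capNumerator E F ext))) →*
      narrowClassGroup E)
    (hf₂ : ∀ (x : Fˣ) (hx : x ∈ capNumerator E F ext)
        (I : (FractionalIdeal (nonZeroDivisors (𝓞 E)) E)ˣ),
      ((ext I : (FractionalIdeal (nonZeroDivisors (𝓞 F)) F)ˣ) :
          FractionalIdeal (nonZeroDivisors (𝓞 F)) F)
        = spanSingleton (nonZeroDivisors (𝓞 F)) (x : F) →
      f₂ (QuotientGroup.mk ⟨x, hx⟩) = QuotientGroup.mk I)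
    (f₃ : narrowClassGroup E →* narrowClassGroup F)
    (hf₃ : ∀ I : (FractionalIdeal (nonZeroDivisors (𝓞 E)) E)ˣ,
      f₃ (QuotientGroup.mk I) = QuotientGroup.mk (ext I)) :
    Function.Injective f₁ ∧
    (∀ y, y ∈ MonoidHom.ker f₂ ↔ y ∈ MonoidHom.range f₁) ∧
    (∀ z, z ∈ MonoidHom.ker f₃ ↔ z ∈ MonoidHom.range f₂) := by

  have hposmap : ∀ e : Eˣ, e ∈ posUnits E →
      Units.map (algebraMap E F).toMonoidHom e ∈ posUnits F := by
    intro e he σ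
    simpa using he (σ.comp (algebraMap E F))
  have hspan1 : ∀ x : Fˣ, x ∈ intUnits F →
      spanSingleton (nonZeroDivisors (𝓞 F)) (x : F) = 1 := by
    intro x hx
    obtain ⟨u, rfl⟩ := hx
    rw [← spanSingleton_one (S := nonZeroDivisors (𝓞 F)), spanSingleton_eq_spanSingleton]
    exact ⟨u⁻¹, by simp [Units.smul_def, Algebra.smul_def, ← _root_.map_mul]⟩
  have hSC : ∀ x : Fˣ, x ∈ posUnits F ⊓ intUnits F → x ∈ capNumerator E F ext := by
    intro x hx
    refine ⟨hx.1, 1, ?_⟩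
    rw [_root_.map_one, Units.val_one, hspan1 x hx.2]
  refine ⟨?_, ?_, ?_⟩
  · rw [injective_iff_map_eq_one]
    intro q hq
    obtain ⟨⟨x, hx⟩, rfl⟩ := QuotientGroup.mk_surjective q
    rw [hf₁ x hx (hSC x hx), QuotientGroup.eq_one_iff, Subgroup.mem_subgroupOf] at hq
    rw [QuotientGroup.eq_one_iff, Subgroup.mem_subgroupOf]
    exact ⟨hq.1, hx⟩
  · intro y
    constructor
    · intro hy
      obtain ⟨⟨x, hx⟩, rfl⟩ := QuotientGroup.mk_surjective y
      obtain ⟨hpos, I, hI⟩ := id hx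
      rw [MonoidHom.mem_ker, hf₂ x hx I hI] at hy
      replace hy := (QuotientGroup.eq_one_iff (N := prinPlus E) I).1 hy
      obtain ⟨eU, heU, hIe⟩ := hy
      set m : Fˣ := Units.map (algebraMap E F).toMonoidHom eU with hm
      have hmpos : m ∈ posUnits F := hposmap eU heU
      have hspan : spanSingleton (nonZeroDivisors (𝓞 F)) (m : F)
          = spanSingleton (nonZeroDivisors (𝓞 F)) (x : F) := by
        rw [← hI, hextdef I, hIe, myExt_span E F hf]
        simp [hm]
      obtain ⟨z, hz⟩ := (spanSingleton_eq_spanSingleton).1 hspan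
      set w : Fˣ := Units.map (algebraMap (𝓞 F) F).toMonoidHom z with hw
      have hxwm : x = w * m := by
        refine Units.ext ?_
        rw [Units.val_mul, ← hz]
        simp [hw, Units.smul_def, Algebra.smul_def]
      have hwS : w ∈ posUnits F ⊓ intUnits F := by
        constructor
        · intro σ
          have hwval : (w : F) = (x : F) * ((m : F))⁻¹ := by
            rw [hxwm, Units.val_mul]
            field_simp
          rw [hwval, _root_.map_mul, map_inv₀]
          exact mul_pos (hpos σ) (inv_pos.2 (hmpos σ))
        · exact ⟨z, rfl⟩
      refine ⟨QuotientGroup.mk ⟨w, hwS⟩, ?_⟩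
      rw [hf₁ w hwS (hSC w hwS), QuotientGroup.eq, Subgroup.mem_subgroupOf]
      have hwx : w⁻¹ * x = m := by rw [hxwm]; group
      show w⁻¹ * x ∈ posEInF E F ⊓ capNumerator E F ext
      constructor
      · show w⁻¹ * x ∈ posEInF E F
        rw [hwx]
        exact ⟨eU, heU, rfl⟩
      · exact Subgroup.mul_mem _ (Subgroup.inv_mem _ (hSC w hwS)) hx
    · rintro ⟨q, rfl⟩
      obtain ⟨⟨x, hx⟩, rfl⟩ := QuotientGroup.mk_surjective q
      rw [MonoidHom.mem_ker, hf₁ x hx (hSC x hx),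
        hf₂ x (hSC x hx) 1 (by rw [_root_.map_one, Units.val_one, hspan1 x hx.2])]
      rfl
  · intro z
    constructor
    · intro hz
      obtain ⟨I, rfl⟩ := QuotientGroup.mk_surjective z
      have hz' : f₃ (QuotientGroup.mk I) = 1 := hz
      rw [hf₃ I] at hz'
      replace hz := (QuotientGroup.eq_one_iff (N := prinPlus F) (ext I)).1 hz'
      obtain ⟨xU, hxU, hxI⟩ := hz
      have hcap : xU ∈ capNumerator E F ext := ⟨hxU, I, hxI⟩
      exact ⟨QuotientGroup.mk ⟨xU, hcap⟩, hf₂ xU hcap I hxI⟩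
    · rintro ⟨q, rfl⟩
      obtain ⟨⟨x, hx⟩, rfl⟩ := QuotientGroup.mk_surjective q
      obtain ⟨hpos, I, hI⟩ := id hx
      rw [MonoidHom.mem_ker, hf₂ x hx I hI, hf₃ I]
      exact (QuotientGroup.eq_one_iff (N := prinPlus F) (ext I)).2 ⟨x, hpos, hI⟩

end
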